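/- Let K be a field of characteristic different from 2, let D ∈ K[X] have even degree 2d with d ≥ 1 and leading coefficient a square in K, and let δ ∈ K((T)) satisfy δ² = ι D. Let p, q ∈ K[X] with q ≠ 0. Then deg(p² − D·q²) < d if and only if (p, q) is a convergent of δ or (p, −q) is a convergent of δ. In particular, for every non-trivial solution (p, q) of the Pell equation p² − D·q² = 1, one of (p, q), (p, −q) is a convergent of δ. -/

import Mathlib

open Polynomial

/-- The ring homomorphism `K[X] → K((T))` sending `X` to `T⁻¹`. -/
noncomputable def iota {K : Type*} [Field K] : Polynomial K →+* LaurentSeries K :=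
  Polynomial.eval₂RingHom (HahnSeries.C : K →+* LaurentSeries K)
    (HahnSeries.single (-1 : ℤ) (1 : K))

/-- `(p, q)` is a convergent of `α`: `q ≠ 0` and `orderTop (ι p - α ι q) > deg q`. -/
def IsConvergent {K : Type*} [Field K] (α : LaurentSeries K) (p q : Polynomial K) : Prop :=
  q ≠ 0 ∧ (q.natDegree : WithTop ℤ) < (iota p - α * iota q).orderTop

namespace PellAux

variable {K : Type*} [Field K]

lemma iota_C (c : K) : iota (Polynomial.C c) = HahnSeries.C c :=
  Polynomial.eval₂_C _ _

lemma iota_C_mul_X_pow (c : K) (n : ℕ) :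
    iota (Polynomial.C c * X ^ n) = HahnSeries.single (-(n : ℤ)) c := by
  rw [map_mul, map_pow, iota_C]
  have hx : iota (X : Polynomial K) = HahnSeries.single (-1 : ℤ) (1 : K) :=
    Polynomial.eval₂_X _ _
  rw [hx, HahnSeries.single_pow, HahnSeries.C_apply, HahnSeries.single_mul_single]
  simp

lemma orderTop_iota : ∀ (f : Polynomial K), f ≠ 0 →
    (iota f).orderTop = ((-(f.natDegree : ℤ) : ℤ) : WithTop ℤ) := by
  suffices H : ∀ (n : ℕ) (f : Polynomial K), f.natDegree = n → f ≠ 0 →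
      (iota f).orderTop = ((-(f.natDegree : ℤ) : ℤ) : WithTop ℤ) by
    exact fun f hf => H f.natDegree f rfl hf
  intro n
  induction n using Nat.strong_induction_on with
  | _ n ih =>
    intro f hn hf
    have hkey := f.eraseLead_add_C_mul_X_pow
    have hlc : f.leadingCoeff ≠ 0 := leadingCoeff_ne_zero.mpr hf
    by_cases h0 : f.eraseLead = 0
    · -- f = C lc * X ^ n
      have hf' : f = Polynomial.C f.leadingCoeff * X ^ f.natDegree := by
        conv_lhs => rw [← hkey]
        rw [h0, zero_add]
      have hiota : iota f = HahnSeries.single (-(f.natDegree : ℤ)) f.leadingCoeff := by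
        conv_lhs => rw [hf']
        exact iota_C_mul_X_pow _ _
      rw [hiota, HahnSeries.orderTop_single hlc]
    · have hlt : f.eraseLead.natDegree < f.natDegree :=
        f.eraseLead_natDegree_lt_or_eraseLead_eq_zero.resolve_right h0
      have ihe := ih f.eraseLead.natDegree (hn ▸ hlt) f.eraseLead rfl h0
      have hsingle : iota (Polynomial.C f.leadingCoeff * X ^ f.natDegree)
          = HahnSeries.single (-(f.natDegree : ℤ)) f.leadingCoeff := iota_C_mul_X_pow _ _
      have hadd : iota f = iota f.eraseLead
          + HahnSeries.single (-(f.natDegree : ℤ)) f.leadingCoeff := by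
        rw [← hsingle, ← map_add, hkey]
      rw [hadd, HahnSeries.orderTop_add_eq_right, HahnSeries.orderTop_single hlc]
      rw [HahnSeries.orderTop_single hlc, ihe]
      exact_mod_cast (by omega : -(f.natDegree : ℤ) < -(f.eraseLead.natDegree : ℤ))

lemma iota_ne_zero {f : Polynomial K} (hf : f ≠ 0) : iota f ≠ 0 := by
  intro h
  have := orderTop_iota f hf
  rw [h, HahnSeries.orderTop_zero] at this
  exact (WithTop.coe_ne_top this.symm)

lemma order_iota {f : Polynomial K} (hf : f ≠ 0) : (iota f).order = -(f.natDegree : ℤ) := by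
  have h1 := HahnSeries.order_eq_orderTop_of_ne_zero (iota_ne_zero hf)
  rw [orderTop_iota f hf] at h1
  exact_mod_cast h1

lemma key (h2 : (2 : K) ≠ 0)
    (D : Polynomial K) (d : ℕ) (hd : 1 ≤ d) (hdeg : D.degree = (2 * d : ℕ))
    (δ : LaurentSeries K) (hδ : δ ^ 2 = iota D)
    (p q : Polynomial K) (hq : q ≠ 0) :
    (p ^ 2 - D * q ^ 2).degree < (d : ℕ) ↔
      (IsConvergent δ p q ∨ IsConvergent δ p (-q)) := by
  set A : LaurentSeries K := iota p - δ * iota q with hA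
  set B : LaurentSeries K := iota p + δ * iota q with hB
  set E : Polynomial K := p ^ 2 - D * q ^ 2 with hE
  have hDne : D ≠ 0 := by
    intro h
    have hb : D.degree = ⊥ := degree_eq_bot.mpr h
    rw [hdeg] at hb
    exact WithBot.coe_ne_bot (by rwa [Nat.cast_withBot] at hb)
  have hDdeg : D.natDegree = 2 * d := natDegree_eq_of_degree_eq_some hdeg
  have hδne : δ ≠ 0 := by
    intro h
    exact iota_ne_zero hDne (by rw [← hδ, h]; ring)
  have hδord : δ.order = -(d : ℤ) := by
    have h1 : (δ ^ 2).order = 2 • δ.order := HahnSeries.order_pow δ 2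
    rw [hδ, order_iota hDne, hDdeg] at h1
    have : -((2 * d : ℕ) : ℤ) = 2 * δ.order := by rw [h1]; ring
    omega
  have h2poly : (2 : Polynomial K) ≠ 0 := by
    rw [← map_ofNat (Polynomial.C : K →+* Polynomial K) 2]
    exact Polynomial.C_ne_zero.mpr h2
  have h2q : (2 : Polynomial K) * q ≠ 0 := mul_ne_zero h2poly hq
  have hBAeq : B - A = δ * iota (2 * q) := by
    rw [map_mul, hA, hB]
    rw [map_ofNat iota 2]; ring
  have hBAne : B - A ≠ 0 := by
    rw [hBAeq]; exact mul_ne_zero hδne (iota_ne_zero h2q)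
  have hn2q : ((2 : Polynomial K) * q).natDegree = q.natDegree := by
    rw [natDegree_mul h2poly hq]
    simp [natDegree_ofNat]
  have hBAord : (B - A).order = -(d : ℤ) - q.natDegree := by
    rw [hBAeq, HahnSeries.order_mul hδne (iota_ne_zero h2q), hδord, order_iota h2q, hn2q]
    ring
  have hmulAB : A * B = iota E := by
    have h1 : A * B = iota p ^ 2 - δ ^ 2 * iota q ^ 2 := by rw [hA, hB]; ring
    rw [h1, hδ, hE, map_sub, map_mul, map_pow, map_pow]
  have hconv : (IsConvergent δ p q ∨ IsConvergent δ p (-q)) ↔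
      ((q.natDegree : WithTop ℤ) < A.orderTop ∨ (q.natDegree : WithTop ℤ) < B.orderTop) := by
    have e1 : iota p - δ * iota (-q) = B := by rw [map_neg]; ring
    unfold IsConvergent
    rw [e1, natDegree_neg, ← hA]
    simp [hq]
  rw [hconv]
  by_cases hEz : E = 0
  · -- both sides true
    have hABz : A = 0 ∨ B = 0 := by
      apply mul_eq_zero.mp
      rw [hmulAB, hEz, map_zero]
    constructor
    · intro _
      rcases hABz with h | h
      · left; rw [h, HahnSeries.orderTop_zero]; exact WithTop.coe_lt_top _
      · right; rw [h, HahnSeries.orderTop_zero]; exact WithTop.coe_lt_top _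
    · intro _
      rw [hEz, degree_zero]
      exact_mod_cast WithBot.bot_lt_coe (d : ℕ)
  · have hABne : A * B ≠ 0 := by rw [hmulAB]; exact iota_ne_zero hEz
    have hAne : A ≠ 0 := fun h => hABne (by rw [h, zero_mul])
    have hBne : B ≠ 0 := fun h => hABne (by rw [h, mul_zero])
    have hab : A.order + B.order = -(E.natDegree : ℤ) := by
      rw [← HahnSeries.order_mul hAne hBne, hmulAB, order_iota hEz]
    have hAot : A.orderTop = ((A.order : ℤ) : WithTop ℤ) :=
      (HahnSeries.order_eq_orderTop_of_ne_zero hAne).symm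
    have hBot : B.orderTop = ((B.order : ℤ) : WithTop ℤ) :=
      (HahnSeries.order_eq_orderTop_of_ne_zero hBne).symm
    have hBAot : (B - A).orderTop = (((-(d : ℤ) - q.natDegree : ℤ)) : WithTop ℤ) := by
      rw [← HahnSeries.order_eq_orderTop_of_ne_zero hBAne, hBAord]
    have hdegE : E.degree < (d : ℕ) ↔ (E.natDegree : ℤ) < (d : ℤ) := by
      rw [← natDegree_lt_iff_degree_lt hEz]
      exact_mod_cast Iff.rfl
    rw [hdegE, hAot, hBot]
    have hcast : ∀ m : ℤ, ((q.natDegree : WithTop ℤ) < (m : WithTop ℤ)) ↔ ((q.natDegree : ℤ) < m) := by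
      intro m
      exact_mod_cast Iff.rfl
    rw [hcast, hcast]
    constructor
    · intro hlt
      have hmin : min B.orderTop A.orderTop ≤ (B - A).orderTop :=
        HahnSeries.min_orderTop_le_orderTop_sub
      rw [hAot, hBot, hBAot] at hmin
      have hmin' : min B.order A.order ≤ -(d : ℤ) - q.natDegree := by
        rw [← WithTop.coe_min] at hmin
        exact_mod_cast hmin
      rcases le_total A.order B.order with h | h
      · rw [min_eq_right h] at hmin'
        right; omega
      · rw [min_eq_left h] at hmin'
        left; omega
    · intro h
      rcases h with h | h
      · -- orderTop A large, so B.order = -d - n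
        have h1 : (B - A).orderTop < A.orderTop := by
          rw [hBAot, hAot]
          exact_mod_cast (by omega : -(d : ℤ) - q.natDegree < A.order)
        have h2' : ((B - A) + A).orderTop = (B - A).orderTop :=
          HahnSeries.orderTop_add_eq_left h1
        rw [sub_add_cancel, hBot, hBAot] at h2'
        have hBord : B.order = -(d : ℤ) - q.natDegree := by exact_mod_cast h2'
        omega
      · -- orderTop B large, so A.order = -d - n
        have h1 : (A - B).orderTop < B.orderTop := by
          have : (A - B).orderTop = (B - A).orderTop := by
            rw [← HahnSeries.orderTop_neg (x := B - A), neg_sub]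
          rw [this, hBAot, hBot]
          exact_mod_cast (by omega : -(d : ℤ) - q.natDegree < B.order)
        have h2' : ((A - B) + B).orderTop = (A - B).orderTop :=
          HahnSeries.orderTop_add_eq_left h1
        have h3 : (A - B).orderTop = (B - A).orderTop := by
          rw [← HahnSeries.orderTop_neg (x := B - A), neg_sub]
        rw [sub_add_cancel, hAot, h3, hBAot] at h2'
        have hAord : A.order = -(d : ℤ) - q.natDegree := by exact_mod_cast h2'
        omega

end PellAux

/-- For `δ² = ι D` with `deg D = 2d`, one has `deg (p² - D q²) < d` iff `(p, q)` or `(p, -q)`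
is a convergent of `δ`.  In particular every non-trivial Pell solution is (up to the sign of
`q`) a convergent of `δ`. -/
theorem weak_pell_solutions_are_convergents {K : Type*} [Field K] (h2 : (2 : K) ≠ 0)
    (D : Polynomial K) (d : ℕ) (hd : 1 ≤ d) (hdeg : D.degree = (2 * d : ℕ))
    (hlc : ∃ c : K, D.leadingCoeff = c ^ 2)
    (δ : LaurentSeries K) (hδ : δ ^ 2 = iota D)
    (p q : Polynomial K) (hq : q ≠ 0) :
    ((p ^ 2 - D * q ^ 2).degree < (d : ℕ) ↔
      (IsConvergent δ p q ∨ IsConvergent δ p (-q))) ∧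
    (∀ p' q' : Polynomial K, q' ≠ 0 → p' ^ 2 - D * q' ^ 2 = 1 →
      (IsConvergent δ p' q' ∨ IsConvergent δ p' (-q'))) := by
  refine ⟨PellAux.key h2 D d hd hdeg δ hδ p q hq, fun p' q' hq' hpell => ?_⟩
  apply (PellAux.key h2 D d hd hdeg δ hδ p' q' hq').mp
  rw [hpell, degree_one]
  exact_mod_cast hd
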